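/- Let q be an element of a commutative ℚ-algebra and let R be a formal power series with constant term 1 satisfying R = 1 + q·x·R + x·R². Then 1 - (q+1)x - x(R - 1) is a unit in the formal power series ring and (1 - (q+1)x)/(1 - (q+1)x - x(R-1)) = (1 - (q+1)x)·R. -/

import Mathlib

open PowerSeries

theorem stmt6 (A : Type*) [CommRing A] [Algebra ℚ A] (q : A)
    (R : PowerSeries A) (hR0 : constantCoeff R = 1)
    (hR : R = 1 + C q * X * R + X * R ^ 2) :
    IsUnit (1 - (C q + 1) * X - X * (R - 1)) ∧
      (1 - (C q + 1) * X - X * (R - 1)) * ((1 - (C q + 1) * X) * R) =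
        1 - (C q + 1) * X := by
  have hDR : (1 - (C q + 1) * X - X * (R - 1)) * R = 1 := by
    linear_combination hR
  constructor
  · rw [isUnit_iff_constantCoeff]
    simp [hR0]
  · linear_combination (1 - (C q + 1) * X) * hDR
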